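/- Let (X,T) be a dynamical system with fixed points x₁, ..., xₙ (n ≥ 2). If for any neighborhoods W_i of x_i there exists a minimal point y such that for each i = 1,...,n there is n_i ∈ ℤ₊ with T^{n_i} y ∈ W_i, then (x₁, x₂, ..., xₙ) is an essential sequence entropy n-tuple of (X,T). -/

import Mathlib

open Filter

variable {X : Type*} [MetricSpace X]

/-- Minimal cardinality of a subcover of the join `⋁_{i=1}^{r} T^{-t_i} U`. -/
noncomputable def coverNum (T : X → X) {k r : ℕ} (U : Fin k → Set X)
    (t : Fin r → ℕ) : ℕ :=
  sInf {m : ℕ | ∃ F : Finset (Fin r → Fin k), F.card = m ∧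
    ∀ x : X, ∃ s ∈ F, ∀ i : Fin r, T^[t i] x ∈ U (s i)}

/-- Topological sequence entropy of the cover `U` along the sequence `A`. -/
noncomputable def seqEnt (T : X → X) {k : ℕ} (U : Fin k → Set X) (A : ℕ → ℕ) : ℝ :=
  Filter.limsup
    (fun r : ℕ => Real.log (coverNum T U fun i : Fin r => A i) / (r : ℝ))
    Filter.atTop

/-- A finite open cover of `X`. -/
def IsOpenCover {k : ℕ} (U : Fin k → Set X) : Prop :=
  (∀ j, IsOpen (U j)) ∧ (⋃ j, U j) = Set.univ

/-- `U` is admissible w.r.t. the tuple `x` if each member of `U` has closure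
missing some coordinate of `x`. -/
def IsAdmissible {k n : ℕ} (x : Fin n → X) (U : Fin k → Set X) : Prop :=
  ∀ j : Fin k, ∃ i : Fin n, x i ∉ closure (U j)

/-- `x` is a sequence entropy `n`-tuple. -/
def IsSeqEntropyTuple (T : X → X) {n : ℕ} (x : Fin n → X) : Prop :=
  (∃ i j, x i ≠ x j) ∧
    ∀ (k : ℕ) (U : Fin k → Set X), IsOpenCover U → IsAdmissible x U →
      ∃ A : ℕ → ℕ, StrictMono A ∧ 0 < seqEnt T U A

/-- `x` is an essential sequence entropy `n`-tuple: pairwise distinct coordinates. -/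
def IsEssentialSETuple (T : X → X) {n : ℕ} (x : Fin n → X) : Prop :=
  Function.Injective x ∧ IsSeqEntropyTuple T x

/-- `(X,T)` is null: it has no sequence entropy pairs. -/
def NullSystem (T : X → X) : Prop :=
  ∀ x y : X, ¬ IsSeqEntropyTuple T ![x, y]

/-- `(x,y)` is a proximal pair. -/
def Proximal (T : X → X) (x y : X) : Prop :=
  ∀ ε > (0 : ℝ), ∃ n : ℕ, dist (T^[n] x) (T^[n] y) < ε

/-- `(X,T)` is distal: the proximal relation is trivial. -/
def Distal (T : X → X) : Prop :=
  ∀ x y : X, Proximal T x y → x = y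

/-- `(x,y)` is regionally proximal. -/
def RegProximal (T : X → X) (x y : X) : Prop :=
  ∀ ε > (0 : ℝ), ∃ (x' y' : X) (n : ℕ),
    dist x x' < ε ∧ dist y y' < ε ∧ dist (T^[n] x') (T^[n] y') < ε

/-- `(X,T)` is equicontinuous. -/
def Equicontinuous' (T : X → X) : Prop :=
  ∀ ε > (0 : ℝ), ∃ δ > (0 : ℝ), ∀ x y : X, dist x y < δ →
    ∀ n : ℕ, dist (T^[n] x) (T^[n] y) < ε

/-- `(X,T)` is mean equicontinuous. -/
def MeanEquicontinuous (T : X → X) : Prop :=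
  ∀ ε > (0 : ℝ), ∃ δ > (0 : ℝ), ∀ x y : X, dist x y < δ →
    Filter.limsup
      (fun n : ℕ => (∑ i ∈ Finset.range n, dist (T^[i] x) (T^[i] y)) / (n : ℝ))
      Filter.atTop < ε

/-- `y` is a minimal point of `(X,T)` if the closure of its forward orbit is a
minimal closed invariant set. -/
def IsMinimalPoint (T : X → X) (y : X) : Prop :=
  ∀ A : Set X, IsClosed A → Set.MapsTo T A A → A.Nonempty →
    A ⊆ closure (Set.range fun n : ℕ => T^[n] y) →
    A = closure (Set.range fun n : ℕ => T^[n] y)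

lemma aux_syndetic {Y : Type*} [MetricSpace Y] [CompactSpace Y] {T : Y → Y}
    (hT : Continuous T) {y : Y} (hy : IsMinimalPoint T y) {V : Set Y}
    (hV : IsOpen V) (hmem : ∃ m : ℕ, T^[m] y ∈ V) :
    ∃ g : ℕ, ∀ t : ℕ, ∃ d ≤ g, T^[t + d] y ∈ V := by
  obtain ⟨m₀, hm₀⟩ := hmem
  set M := closure (Set.range fun m : ℕ => T^[m] y) with hM
  have hMclosed : IsClosed M := isClosed_closure
  have horb : ∀ t : ℕ, T^[t] y ∈ M := fun t => subset_closure ⟨t, rfl⟩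
  have himg : ∀ z : Y, ∀ S : Set Y, z ∈ closure S → T z ∈ closure (T '' S) := by
    intro z S hz
    exact (image_closure_subset_closure_image hT) ⟨z, hz, rfl⟩
  have hmaps : ∀ z : Y, Set.MapsTo T (closure (Set.range fun m : ℕ => T^[m] z))
      (closure (Set.range fun m : ℕ => T^[m] z)) := by
    intro z w hw
    have h1 : T w ∈ closure (T '' Set.range fun m : ℕ => T^[m] z) := himg w _ hw
    refine closure_mono ?_ h1
    rintro _ ⟨_, ⟨m, rfl⟩, rfl⟩
    exact ⟨m + 1, by simp [Function.iterate_succ_apply']⟩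
  have hsub_orbit : ∀ z ∈ M, ∀ m : ℕ, T^[m] z ∈ M := by
    intro z hz m
    induction m with
    | zero => simpa using hz
    | succ m ih =>
        rw [Function.iterate_succ_apply']
        exact hmaps y ih
  have key : ∀ z ∈ M, ∃ m : ℕ, T^[m] z ∈ V := by
    intro z hz
    have hsub : closure (Set.range fun m : ℕ => T^[m] z) ⊆ M := by
      apply closure_minimal _ hMclosed
      rintro _ ⟨m, rfl⟩
      exact hsub_orbit z hz m
    have hA : closure (Set.range fun m : ℕ => T^[m] z) = M :=
      hy _ isClosed_closure (hmaps z) ⟨z, subset_closure ⟨0, rfl⟩⟩ hsub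
    have hmem' : T^[m₀] y ∈ closure (Set.range fun m : ℕ => T^[m] z) := by
      rw [hA]; exact horb m₀
    rcases mem_closure_iff.mp hmem' V hV hm₀ with ⟨w, hwV, ⟨m, rfl⟩⟩
    exact ⟨m, hwV⟩
  have hcover : M ⊆ ⋃ m : ℕ, (T^[m]) ⁻¹' V := by
    intro z hz
    obtain ⟨m, hm⟩ := key z hz
    exact Set.mem_iUnion.mpr ⟨m, hm⟩
  obtain ⟨F, hF⟩ := (hMclosed.isCompact).elim_finite_subcover
    (fun m : ℕ => (T^[m]) ⁻¹' V) (fun m => hV.preimage (hT.iterate m)) hcover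
  refine ⟨F.sup id, fun t => ?_⟩
  have := hF (horb t)
  rcases Set.mem_iUnion₂.mp this with ⟨m, hmF, hmV⟩
  refine ⟨m, Finset.le_sup (f := id) hmF, ?_⟩
  rw [Nat.add_comm, Function.iterate_add_apply]
  exact hmV

lemma aux_rec {Y : Type*} [MetricSpace Y] [CompactSpace Y] {T : Y → Y}
    (hT : Continuous T) {n : ℕ} {x : Fin n → Y} (hfix : ∀ i, T (x i) = x i)
    (hmin : ∀ W : Fin n → Set Y, (∀ i, IsOpen (W i)) → (∀ i, x i ∈ W i) →
      ∃ y : Y, IsMinimalPoint T y ∧ ∀ i, ∃ m : ℕ, T^[m] y ∈ W i)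
    {W : Fin n → Set Y} (hWopen : ∀ i, IsOpen (W i)) (hWmem : ∀ i, x i ∈ W i)
    (r : ℕ) (ls : List (Fin r → Fin n)) :
    ∃ L : ℕ, ∀ a : ℕ → ℕ, ∃ t : ℕ → ℕ,
      (∀ j, a j ≤ t j ∧ t j ≤ a j + L) ∧
      ∀ s ∈ ls, ∃ z : Y, ∀ j : Fin r, T^[t j.1] z ∈ W (s j) := by
  classical
  induction ls with
  | nil =>
      exact ⟨0, fun a => ⟨a, fun j => ⟨le_rfl, by omega⟩, by simp⟩⟩
  | cons s ls ih =>
      obtain ⟨L, hL⟩ := ih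
      set V : Fin n → Set Y :=
        fun i => ⋂ m ∈ Finset.range (L + 1), (T^[m]) ⁻¹' (W i) with hV
      have hVopen : ∀ i, IsOpen (V i) := fun i =>
        isOpen_biInter_finset fun m _ => (hWopen i).preimage (hT.iterate m)
      have hVmem : ∀ i, x i ∈ V i := by
        intro i
        refine Set.mem_iInter₂.mpr fun m _ => ?_
        simp [Function.iterate_fixed (hfix i)]
        exact hWmem i
      obtain ⟨y, hymin, hyvisit⟩ := hmin V hVopen hVmem
      have hsynd : ∀ i, ∃ g : ℕ, ∀ t : ℕ, ∃ d ≤ g, T^[t + d] y ∈ V i := fun i =>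
        aux_syndetic hT hymin (hVopen i) (hyvisit i)
      choose g hg using hsynd
      set G := Finset.univ.sup g with hG
      refine ⟨G + L, fun a => ?_⟩
      have hc : ∀ j : ℕ, ∃ c : ℕ, a j ≤ c ∧ c ≤ a j + G ∧
          ∀ hj : j < r, T^[c] y ∈ V (s ⟨j, hj⟩) := by
        intro j
        by_cases hj : j < r
        · obtain ⟨d, hd, hdV⟩ := hg (s ⟨j, hj⟩) (a j)
          exact ⟨a j + d, Nat.le_add_right _ _,
            Nat.add_le_add_left (hd.trans (Finset.le_sup (Finset.mem_univ _))) _,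
            fun _ => hdV⟩
        · exact ⟨a j, le_rfl, Nat.le_add_right _ _, fun hj' => absurd hj' hj⟩
      choose c hc1 hc2 hc3 using hc
      obtain ⟨t, ht1, ht2⟩ := hL c
      refine ⟨t, fun j => ⟨(hc1 j).trans (ht1 j).1,
        (ht1 j).2.trans (by have := hc2 j; omega)⟩, ?_⟩
      intro s' hs'
      rcases List.mem_cons.mp hs' with h | h
      · subst h
        refine ⟨y, fun j => ?_⟩
        have h1 : c j.1 ≤ t j.1 := (ht1 j.1).1
        have h2 : t j.1 ≤ c j.1 + L := (ht1 j.1).2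
        have hmem := hc3 j.1 j.isLt
        have hiter : T^[t j.1] y = T^[t j.1 - c j.1] (T^[c j.1] y) := by
          rw [← Function.iterate_add_apply]
          congr 1
          omega
        rw [hiter]
        have := Set.mem_iInter₂.mp hmem (t j.1 - c j.1)
          (Finset.mem_range.mpr (by omega))
        exact this
      · exact ht2 s' h

lemma aux_indep {Y : Type*} [MetricSpace Y] [CompactSpace Y] {T : Y → Y}
    (hT : Continuous T) {n : ℕ} {x : Fin n → Y} (hfix : ∀ i, T (x i) = x i)
    (hmin : ∀ W : Fin n → Set Y, (∀ i, IsOpen (W i)) → (∀ i, x i ∈ W i) →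
      ∃ y : Y, IsMinimalPoint T y ∧ ∀ i, ∃ m : ℕ, T^[m] y ∈ W i)
    {W : Fin n → Set Y} (hWopen : ∀ i, IsOpen (W i)) (hWmem : ∀ i, x i ∈ W i)
    (r N : ℕ) :
    ∃ t : ℕ → ℕ, StrictMono t ∧ N < t 0 ∧
      ∀ s : Fin r → Fin n, ∃ z : Y, ∀ j : Fin r, T^[t j.1] z ∈ W (s j) := by
  classical
  obtain ⟨L, hL⟩ := aux_rec hT hfix hmin hWopen hWmem r
    (Finset.univ : Finset (Fin r → Fin n)).toList
  obtain ⟨t, ht1, ht2⟩ := hL (fun j => N + 1 + j * (L + 1))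
  refine ⟨t, ?_, ?_, fun s => ht2 s (by simp [Finset.mem_toList])⟩
  · apply strictMono_nat_of_lt_succ
    intro j
    have h1 := (ht1 j).2
    have h2 := (ht1 (j + 1)).1
    have h3 : (j + 1) * (L + 1) = j * (L + 1) + (L + 1) := by ring
    omega
  · have := (ht1 0).1
    omega

lemma aux_count {Y : Type*} {T : Y → Y} {n k q r : ℕ}
    {U : Fin k → Set Y} {W : Fin n → Set Y} {f : Fin k → Fin n}
    (hdisj : ∀ j, U j ∩ W (f j) = ∅) {t : Fin r → ℕ} {J : Fin q → Fin r}
    (hindep : ∀ s : Fin q → Fin n, ∃ z : Y, ∀ j, T^[t (J j)] z ∈ W (s j))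
    {m : ℕ}
    (hm : ∃ F : Finset (Fin r → Fin k), F.card = m ∧
      ∀ x : Y, ∃ s ∈ F, ∀ i : Fin r, T^[t i] x ∈ U (s i)) :
    n ^ q ≤ m * (n - 1) ^ q := by
  classical
  obtain ⟨F, rfl, hF⟩ := hm
  choose z hz using hindep
  choose σ hσF hσ using fun s => hF (z s)
  have hkey : ∀ (s : Fin q → Fin n) (j : Fin q), s j ≠ f (σ s (J j)) := by
    intro s j h
    have h1 : T^[t (J j)] (z s) ∈ U (σ s (J j)) := hσ s (J j)
    have h2 : T^[t (J j)] (z s) ∈ W (s j) := hz s j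
    rw [h] at h2
    have : T^[t (J j)] (z s) ∈ U (σ s (J j)) ∩ W (f (σ s (J j))) := ⟨h1, h2⟩
    rw [hdisj] at this
    exact this
  have hsub : (Finset.univ : Finset (Fin q → Fin n)) ⊆
      F.biUnion (fun σ' => Finset.univ.filter
        (fun s : Fin q → Fin n => ∀ j, s j ≠ f (σ' (J j)))) := by
    intro s _
    exact Finset.mem_biUnion.mpr ⟨σ s, hσF s,
      Finset.mem_filter.mpr ⟨Finset.mem_univ _, hkey s⟩⟩
  have h1 : (Finset.univ : Finset (Fin q → Fin n)).card ≤
      ∑ σ' ∈ F, (Finset.univ.filter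
        (fun s : Fin q → Fin n => ∀ j, s j ≠ f (σ' (J j)))).card :=
    (Finset.card_le_card hsub).trans Finset.card_biUnion_le
  have h2 : ∀ σ' : Fin r → Fin k, (Finset.univ.filter
      (fun s : Fin q → Fin n => ∀ j, s j ≠ f (σ' (J j)))).card ≤ (n - 1) ^ q := by
    intro σ'
    have hss : Finset.univ.filter
        (fun s : Fin q → Fin n => ∀ j, s j ≠ f (σ' (J j))) ⊆
        Fintype.piFinset (fun j : Fin q => Finset.univ.erase (f (σ' (J j)))) := by
      intro s hs
      rw [Fintype.mem_piFinset]
      intro j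
      exact Finset.mem_erase.mpr ⟨(Finset.mem_filter.mp hs).2 j, Finset.mem_univ _⟩
    calc (Finset.univ.filter
        (fun s : Fin q → Fin n => ∀ j, s j ≠ f (σ' (J j)))).card
        ≤ (Fintype.piFinset (fun j : Fin q =>
            Finset.univ.erase (f (σ' (J j))))).card := Finset.card_le_card hss
      _ = ∏ j : Fin q, (Finset.univ.erase (f (σ' (J j)))).card :=
          Fintype.card_piFinset _
      _ = (n - 1) ^ q := by
          have : ∀ j : Fin q, (Finset.univ.erase (f (σ' (J j)))).card = n - 1 := by
            intro j
            rw [Finset.card_erase_of_mem (Finset.mem_univ _), Finset.card_univ,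
              Fintype.card_fin]
          simp [this]
  have h3 : (Finset.univ : Finset (Fin q → Fin n)).card = n ^ q := by
    simp [Finset.card_univ]
  calc n ^ q = (Finset.univ : Finset (Fin q → Fin n)).card := h3.symm
    _ ≤ ∑ σ' ∈ F, (Finset.univ.filter
        (fun s : Fin q → Fin n => ∀ j, s j ≠ f (σ' (J j)))).card := h1
    _ ≤ ∑ _σ' ∈ F, (n - 1) ^ q := Finset.sum_le_sum fun σ' _ => h2 σ'
    _ = F.card * (n - 1) ^ q := by rw [Finset.sum_const, smul_eq_mul]


/-- if `x₁,…,xₙ` (`n ≥ 2`, pairwise distinct) are fixed points such that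
for all neighbourhoods `Wᵢ` of the `xᵢ` some minimal point visits all the `Wᵢ`,
then `(x₁,…,xₙ)` is an essential sequence entropy `n`-tuple. -/
theorem stmt_6 {Y : Type*} [MetricSpace Y] [CompactSpace Y] (T : Y → Y)
    (hT : Continuous T) (n : ℕ) (hn : 2 ≤ n)
    (x : Fin n → Y) (hfix : ∀ i, T (x i) = x i) (hinj : Function.Injective x)
    (hmin : ∀ W : Fin n → Set Y, (∀ i, IsOpen (W i)) → (∀ i, x i ∈ W i) →
      ∃ y : Y, IsMinimalPoint T y ∧ ∀ i, ∃ m : ℕ, T^[m] y ∈ W i) :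
    IsEssentialSETuple T x := by
  classical
  refine ⟨hinj, ⟨⟨0, by omega⟩, ⟨1, by omega⟩, fun h => ?_⟩, ?_⟩
  · have h2 := hinj h
    simp [Fin.mk.injEq] at h2
  intro k U hUcov hUadm
  choose f hf using hUadm
  set W : Fin n → Set Y :=
    fun i => ⋂ j : Fin k, (if f j = i then (closure (U j))ᶜ else Set.univ) with hWdef
  have hWopen : ∀ i, IsOpen (W i) := by
    intro i
    apply isOpen_iInter_of_finite
    intro j
    split
    · exact isClosed_closure.isOpen_compl
    · exact isOpen_univ
  have hWmem : ∀ i, x i ∈ W i := by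
    intro i
    refine Set.mem_iInter.mpr fun j => ?_
    by_cases h : f j = i
    · simp only [if_pos h]
      rw [← h]
      exact hf j
    · simp [if_neg h]
  have hWdisj : ∀ j : Fin k, U j ∩ W (f j) = ∅ := by
    intro j
    ext w
    simp only [Set.mem_inter_iff, Set.mem_empty_iff_false, iff_false, not_and]
    intro hwU hwW
    have h1 := Set.mem_iInter.mp hwW j
    rw [if_pos rfl] at h1
    exact h1 (subset_closure hwU)
  have hIndep : ∀ r N : ℕ, ∃ t : ℕ → ℕ, StrictMono t ∧ N < t 0 ∧
      ∀ s : Fin r → Fin n, ∃ z : Y, ∀ j : Fin r, T^[t j.1] z ∈ W (s j) :=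
    fun r N => aux_indep hT hfix hmin hWopen hWmem r N
  choose tt htt1 htt2 htt3 using hIndep
  set Nb : ℕ → ℕ :=
    fun m => Nat.rec 0 (fun m prev => tt (2 ^ m) prev (2 ^ m - 1)) m with hNb
  set Q : ℕ → ℕ → ℕ := fun m => tt (2 ^ m) (Nb m) with hQ
  set A : ℕ → ℕ :=
    fun idx => Q (Nat.log 2 (idx + 1)) (idx + 1 - 2 ^ (Nat.log 2 (idx + 1))) with hA
  have hone : ∀ m : ℕ, 1 ≤ 2 ^ m := fun m => Nat.one_le_two_pow
  have hQmono : ∀ m, StrictMono (Q m) := fun m => htt1 _ _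
  have hQreal : ∀ m, ∀ s : Fin (2 ^ m) → Fin n,
      ∃ z : Y, ∀ j : Fin (2 ^ m), T^[Q m j.1] z ∈ W (s j) := fun m => htt3 _ _
  have hQlink : ∀ m, Q m (2 ^ m - 1) < Q (m + 1) 0 := fun m => htt2 _ _
  have hAeq : ∀ m j : ℕ, j < 2 ^ m → A (2 ^ m - 1 + j) = Q m j := by
    intro m j hj
    have h1 : 2 ^ m - 1 + j + 1 = 2 ^ m + j := by have := hone m; omega
    have hlog : Nat.log 2 (2 ^ m + j) = m := by
      apply Nat.log_eq_of_pow_le_of_lt_pow (Nat.le_add_right _ _)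
      rw [pow_succ]
      omega
    rw [hA]
    simp only [h1, hlog]
    congr 1
    omega
  have hAmono : StrictMono A := by
    apply strictMono_nat_of_lt_succ
    intro idx
    have hge : 2 ^ (Nat.log 2 (idx + 1)) ≤ idx + 1 := Nat.pow_log_le_self 2 (by omega)
    have hlt : idx + 1 < 2 ^ (Nat.log 2 (idx + 1) + 1) :=
      Nat.lt_pow_succ_log_self (by norm_num) _
    set m := Nat.log 2 (idx + 1) with hm
    by_cases hcase : idx + 2 < 2 ^ (m + 1)
    · have hlog2 : Nat.log 2 (idx + 2) = m :=
        Nat.log_eq_of_pow_le_of_lt_pow (by omega) hcase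
      have e1 : A idx = Q m (idx + 1 - 2 ^ m) := by rw [hA]
      have e2 : A (idx + 1) = Q m (idx + 2 - 2 ^ m) := by
        rw [hA]
        simp only [hlog2]
      rw [e1, e2]
      exact hQmono m (by omega)
    · have heq : idx + 2 = 2 ^ (m + 1) := by omega
      have hlog2 : Nat.log 2 (idx + 2) = m + 1 := by
        rw [heq]; exact Nat.log_pow (by norm_num : 1 < 2) _
      have e1 : A idx = Q m (2 ^ m - 1) := by
        rw [hA]
        simp only [← hm]
        congr 1
        rw [pow_succ] at heq
        omega
      have e2 : A (idx + 1) = Q (m + 1) 0 := by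
        rw [hA]
        simp only [hlog2]
        congr 1
        omega
      rw [e1, e2]
      exact hQlink m
  refine ⟨A, hAmono, ?_⟩
  have hk : 1 ≤ k := by
    have hx0 : (x ⟨0, by omega⟩ : Y) ∈ ⋃ j, U j := hUcov.2 ▸ Set.mem_univ _
    obtain ⟨j, -⟩ := Set.mem_iUnion.mp hx0
    exact j.pos
  have hcovfn : ∀ w : Y, ∃ j : Fin k, w ∈ U j := fun w =>
    Set.mem_iUnion.mp (hUcov.2 ▸ Set.mem_univ w)
  have hSmem : ∀ (r : ℕ) (tv : Fin r → ℕ),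
      ∃ F : Finset (Fin r → Fin k), F.card = coverNum T U tv ∧
        ∀ w : Y, ∃ s ∈ F, ∀ i : Fin r, T^[tv i] w ∈ U (s i) := by
    intro r tv
    have hne : {m : ℕ | ∃ F : Finset (Fin r → Fin k), F.card = m ∧
        ∀ w : Y, ∃ s ∈ F, ∀ i : Fin r, T^[tv i] w ∈ U (s i)}.Nonempty := by
      refine ⟨(Finset.univ : Finset (Fin r → Fin k)).card, Finset.univ, rfl, ?_⟩
      intro w
      choose jw hjw using fun i : Fin r => hcovfn (T^[tv i] w)
      exact ⟨jw, Finset.mem_univ _, hjw⟩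
    exact Nat.sInf_mem hne
  have hub : ∀ r : ℕ,
      Real.log (coverNum T U fun i : Fin r => A i) / (r : ℝ) ≤
        max (Real.log k) 0 := by
    intro r
    rcases Nat.eq_zero_or_pos r with hr | hr
    · subst hr
      simp
    · have hle : coverNum T U (fun i : Fin r => A i) ≤ k ^ r := by
        apply Nat.sInf_le
        refine ⟨Finset.univ, by simp, ?_⟩
        intro w
        choose jw hjw using fun i : Fin r => hcovfn (T^[A i] w)
        exact ⟨jw, Finset.mem_univ _, hjw⟩
      have hlogk : (0:ℝ) ≤ Real.log k :=
        Real.log_nonneg (by exact_mod_cast hk)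
      have hlog : Real.log (coverNum T U fun i : Fin r => A i) ≤
          r * Real.log k := by
        rcases Nat.eq_zero_or_pos (coverNum T U fun i : Fin r => A i) with h0 | h0
        · rw [h0]
          simp only [Nat.cast_zero, Real.log_zero]
          positivity
        · calc Real.log (coverNum T U fun i : Fin r => A i)
              ≤ Real.log ((k : ℝ) ^ r) := by
                apply Real.log_le_log (by exact_mod_cast h0)
                rw [show ((k:ℝ)^r) = ((k^r : ℕ) : ℝ) by push_cast; ring]
                exact_mod_cast hle
            _ = r * Real.log k := Real.log_pow (n := r) (x := (k:ℝ))
      have hrpos : (0:ℝ) < r := by exact_mod_cast hr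
      calc Real.log (coverNum T U fun i : Fin r => A i) / (r : ℝ)
          ≤ (r * Real.log k) / r := by gcongr
        _ = Real.log k := by field_simp
        _ ≤ max (Real.log k) 0 := le_max_left _ _
  have hbdd : IsBoundedUnder (· ≤ ·) atTop
      (fun r : ℕ => Real.log (coverNum T U fun i : Fin r => A i) / (r : ℝ)) :=
    isBoundedUnder_of ⟨max (Real.log k) 0, hub⟩
  set β := Real.log n - Real.log ((n:ℝ) - 1) with hβ
  have hn2 : (2:ℝ) ≤ (n:ℝ) := by exact_mod_cast hn
  have hβpos : 0 < β := by
    have h1 : (0:ℝ) < (n:ℝ) - 1 := by linarith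
    have := Real.log_lt_log h1 (by linarith : (n:ℝ) - 1 < n)
    rw [hβ]
    linarith
  have hcheck : ∀ m : ℕ, β / 2 ≤
      Real.log (coverNum T U fun i : Fin (2 ^ (m+1) - 1) => A i) /
        ((2 ^ (m+1) - 1 : ℕ) : ℝ) := by
    intro m
    have h2q : 2 ^ (m + 1) = 2 * 2 ^ m := by rw [pow_succ]; ring
    have hq1 := hone m
    have hJlt : ∀ j : Fin (2 ^ m), 2 ^ m - 1 + j.1 < 2 ^ (m+1) - 1 := by
      intro j
      have := j.isLt
      omega
    set J : Fin (2 ^ m) → Fin (2 ^ (m+1) - 1) :=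
      fun j => ⟨2 ^ m - 1 + j.1, hJlt j⟩ with hJ
    have hindep : ∀ s : Fin (2 ^ m) → Fin n, ∃ z : Y, ∀ j : Fin (2 ^ m),
        T^[(fun i : Fin (2 ^ (m+1) - 1) => A i) (J j)] z ∈ W (s j) := by
      intro s
      obtain ⟨z, hz⟩ := hQreal m s
      refine ⟨z, fun j => ?_⟩
      have h1 := hz j
      have heq : A (2 ^ m - 1 + j.1) = Q m j.1 := hAeq m j.1 j.isLt
      simpa [hJ, heq] using h1
    have hcount : n ^ (2 ^ m) ≤
        (coverNum T U fun i : Fin (2 ^ (m+1) - 1) => A i) * (n - 1) ^ (2 ^ m) :=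
      aux_count hWdisj hindep (hSmem _ _)
    set C := coverNum T U fun i : Fin (2 ^ (m+1) - 1) => A i with hC
    have hCpos : 0 < C := by
      by_contra h
      push_neg at h
      have hC0 : C = 0 := by omega
      rw [hC0, Nat.zero_mul] at hcount
      have : 0 < n ^ (2 ^ m) := Nat.pow_pos (by omega)
      omega
    have hcast : ((n:ℝ)) ^ (2 ^ m) ≤ (C:ℝ) * ((n:ℝ) - 1) ^ (2 ^ m) := by
      have h1 := (Nat.cast_le (α := ℝ)).mpr hcount
      push_cast [Nat.cast_sub (by omega : 1 ≤ n)] at h1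
      exact h1
    have hlogC : ((2 ^ m : ℕ) : ℝ) * β ≤ Real.log C := by
      have hn1 : (0:ℝ) < (n:ℝ) - 1 := by linarith
      have h1 : Real.log ((n:ℝ) ^ (2 ^ m)) ≤
          Real.log ((C:ℝ) * ((n:ℝ) - 1) ^ (2 ^ m)) :=
        Real.log_le_log (by positivity) hcast
      rw [Real.log_pow, Real.log_mul (Nat.cast_ne_zero.mpr (by omega))
          (pow_pos hn1 _).ne', Real.log_pow] at h1
      rw [hβ]
      push_cast at h1 ⊢
      nlinarith [h1]
    have hrpos : (0:ℝ) < ((2 ^ (m+1) - 1 : ℕ) : ℝ) := by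
      have h := hone (m+1)
      exact_mod_cast (by omega : 0 < 2 ^ (m+1) - 1)
    rw [le_div_iff₀ hrpos]
    have hrle : ((2 ^ (m+1) - 1 : ℕ) : ℝ) ≤ 2 * ((2 ^ m : ℕ) : ℝ) := by
      rw [show ((2 ^ (m+1) - 1 : ℕ) : ℝ) = ((2 ^ (m+1) : ℕ) : ℝ) - 1 by
        rw [Nat.cast_sub (hone _)]; norm_num]
      push_cast
      rw [pow_succ]
      ring_nf
      nlinarith []
    have hq1' : (1:ℝ) ≤ ((2 ^ m : ℕ) : ℝ) := by exact_mod_cast hq1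
    nlinarith [hβpos, hlogC, hq1', hrle]
  have hfreq : ∃ᶠ r in atTop,
      β / 2 ≤ Real.log (coverNum T U fun i : Fin r => A i) / (r : ℝ) := by
    rw [Filter.frequently_atTop]
    intro b
    refine ⟨2 ^ (b + 1) - 1, ?_, ?_⟩
    · have h1 : b < 2 ^ b := Nat.lt_two_pow_self (n := b)
      have h2 : 2 ^ b ≤ 2 ^ (b + 1) := Nat.pow_le_pow_right (by norm_num) (by omega)
      omega
    · have := hcheck b
      exact_mod_cast this
  have hfin : β / 2 ≤ seqEnt T U A :=
    Filter.le_limsup_of_frequently_le hfreq hbdd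
  linarith
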